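/- arXiv:2004.10917 — 2 statements merged into one kernel-verified Lean document; each statement's English description precedes it below -/
import Mathlib

section
/- Let F consist of the 4-cycle together with all graphs formed by two 3-cycles at distance at most 1. Let G be a graph containing no graph of F as a subgraph, and let v be a d-vertex of G adjacent to exactly d−2 vertices of degree 3, such that v lies on a 3-cycle w1w2w3 or is adjacent to a vertex of a 3-cycle w1w2w3. Then the subgraph H of G induced by A ∪ {v} ∪ {w1,w2,w3}, where A is the set of degree-3 neighbors of v, is (F,4)-boundary-reducible with boundary B = V(H) \ (A ∪ {v}). -/
open Finset

/-- A proper coloring of `G` from the lists `L`. -/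
def IsProperListColoring {V : Type} (G : SimpleGraph V) (L : V → Finset ℕ) (φ : V → ℕ) : Prop :=
  (∀ v, φ v ∈ L v) ∧ ∀ ⦃u v : V⦄, G.Adj u v → φ u ≠ φ v

/-- `G` is weighted `ε`-flexible for lists of size `k`. -/
def WeightedFlexible {V : Type} [Fintype V] (G : SimpleGraph V) (k : ℕ) (ε : ℝ) : Prop :=
  ∀ L : V → Finset ℕ, (∀ v, k ≤ (L v).card) →
    ∀ w : V → ℕ → ℝ, (∀ v c, 0 ≤ w v c) → (∀ v c, c ∉ L v → w v c = 0) →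
      ∃ φ : V → ℕ, IsProperListColoring G L φ ∧
        ε * (∑ v, ∑ c ∈ L v, w v c) ≤ ∑ v, w v (φ v)

/-- `G` is weakly `ε`-flexible for lists of size `k`. -/
def WeaklyFlexible {V : Type} [Fintype V] (G : SimpleGraph V) (k : ℕ) (ε : ℝ) : Prop :=
  ∀ L : V → Finset ℕ, (∀ v, k ≤ (L v).card) →
    ∀ r : V → ℕ, (∀ v, r v ∈ L v) →
      ∃ φ : V → ℕ, IsProperListColoring G L φ ∧
        ε * (Fintype.card V : ℝ) ≤ ((Finset.univ.filter fun v => φ v = r v).card : ℝ)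

/-- `G` has a drawing in the plane: vertices go to distinct points, edges to simple
continuous arcs joining their endpoints, arcs internally avoid vertices and each other. -/
def HasPlanarEmbedding {V : Type} (G : SimpleGraph V) : Prop :=
  ∃ (pos : V → ℝ × ℝ) (γ : Sym2 V → ℝ → ℝ × ℝ),
    Function.Injective pos ∧
    (∀ e ∈ G.edgeSet, ContinuousOn (γ e) (Set.Icc 0 1)) ∧
    (∀ e ∈ G.edgeSet, Set.InjOn (γ e) (Set.Icc 0 1)) ∧
    (∀ u v : V, G.Adj u v → ({γ s(u, v) 0, γ s(u, v) 1} : Set (ℝ × ℝ)) = {pos u, pos v}) ∧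
    (∀ e ∈ G.edgeSet, ∀ t ∈ Set.Ioo (0 : ℝ) 1, γ e t ∉ Set.range pos) ∧
    (∀ e ∈ G.edgeSet, ∀ f ∈ G.edgeSet, e ≠ f →
      ∀ s ∈ Set.Ioo (0 : ℝ) 1, ∀ t ∈ Set.Ioo (0 : ℝ) 1, γ e s ≠ γ f t)

/-- `G` contains a copy of the graph `p.2` as a (not necessarily induced) subgraph. -/
def ContainsCopy {V : Type} (G : SimpleGraph V) (p : (W : Type) × SimpleGraph W) : Prop :=
  ∃ f : p.2 →g G, Function.Injective f

/-- `K₄` minus an edge (the diamond). -/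
def diamondGraph : SimpleGraph (Fin 4) :=
  SimpleGraph.fromEdgeSet {s(0, 1), s(0, 2), s(0, 3), s(1, 2), s(1, 3)}

/-- The house: a `3`-cycle `0 1 4` and a `4`-cycle `0 1 2 3` sharing the edge `01`. -/
def houseGraph : SimpleGraph (Fin 5) :=
  SimpleGraph.fromEdgeSet {s(0, 1), s(1, 2), s(2, 3), s(3, 0), s(0, 4), s(1, 4)}

/-- Two triangles sharing exactly one vertex. -/
def bowtieGraph : SimpleGraph (Fin 5) :=
  SimpleGraph.fromEdgeSet {s(0, 1), s(1, 2), s(0, 2), s(0, 3), s(3, 4), s(0, 4)}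

/-- Two disjoint triangles joined by an edge. -/
def twoTrianglesEdgeGraph : SimpleGraph (Fin 6) :=
  SimpleGraph.fromEdgeSet {s(0, 1), s(1, 2), s(0, 2), s(3, 4), s(4, 5), s(3, 5), s(0, 3)}

def IsTriangle {V : Type} (G : SimpleGraph V) (a b c : V) : Prop :=
  G.Adj a b ∧ G.Adj b c ∧ G.Adj a c

/-- Any two distinct `3`-cycles of `G` are at distance at least `2`. -/
def TrianglesFarApart {V : Type} (G : SimpleGraph V) : Prop :=
  ∀ a b c a' b' c' : V, IsTriangle G a b c → IsTriangle G a' b' c' →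
    ({a, b, c} : Set V) ≠ ({a', b', c'} : Set V) →
    ∀ x ∈ ({a, b, c} : Set V), ∀ y ∈ ({a', b', c'} : Set V), x ≠ y ∧ ¬ G.Adj x y

/-- Every nonempty (induced) subgraph of `G` has a vertex of degree at most `d`. -/
def Degenerate {V : Type} (G : SimpleGraph V) [DecidableRel G.Adj] (d : ℕ) : Prop :=
  ∀ S : Finset V, S.Nonempty → ∃ v ∈ S, (S.filter fun w => G.Adj v w).card ≤ d

/-- The degree of `v` into the set `A`. -/
def degIn {V : Type} (G : SimpleGraph V) [DecidableRel G.Adj] (A : Finset V) (v : V) : ℕ :=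
  (A.filter fun w => G.Adj v w).card

/-- The graph induced by `G` on `T` is colorable from every list assignment
with list sizes at least `f`. -/
def ColorableOn {V : Type} (G : SimpleGraph V) (T : Finset V) (f : V → ℤ) : Prop :=
  ∀ L : V → Finset ℕ, (∀ v ∈ T, f v ≤ ((L v).card : ℤ)) →
    ∃ φ : V → ℕ, (∀ v ∈ T, φ v ∈ L v) ∧ ∀ u ∈ T, ∀ v ∈ T, G.Adj u v → φ u ≠ φ v

/-- The subgraph of `G` induced on `S`, together with one additional vertex
adjacent exactly to the vertices of `I`. -/
def apexGraph {V : Type} (G : SimpleGraph V) (S I : Finset V) :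
    SimpleGraph ({x // x ∈ S} ⊕ Unit) where
  Adj x y :=
    match x, y with
    | Sum.inl a, Sum.inl b => G.Adj a.1 b.1
    | Sum.inl a, Sum.inr _ => a.1 ∈ I
    | Sum.inr _, Sum.inl b => b.1 ∈ I
    | Sum.inr _, Sum.inr _ => False
  symm := ⟨by
    rintro (a | a) (b | b) h
    · exact G.adj_symm h
    · exact h
    · exact h
    · exact h⟩
  loopless := ⟨by
    rintro (a | a) h
    · exact G.irrefl h
    · exact h⟩

/-- `I ⊆ S` is `F`-forbidding (for the subgraph of `G` induced on `S`):
the induced subgraph plus an apex over `I` contains no member of `F` as a subgraph. -/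
def Forbidding {V : Type} (F : Set ((W : Type) × SimpleGraph W)) (G : SimpleGraph V)
    (S I : Finset V) : Prop :=
  ∀ p ∈ F, ¬ ContainsCopy (apexGraph G S I) p

/-- The subgraph of `G` induced on `S` is `(F,k)`-boundary-reducible with boundary `B`,
inside the ambient induced subgraph of `G` on `A` (degrees `deg_G` are measured in `A`). -/
def BoundaryReducibleIn {V : Type} [DecidableEq V] (F : Set ((W : Type) × SimpleGraph W))
    (k : ℕ) (G : SimpleGraph V) [DecidableRel G.Adj] (A S B : Finset V) : Prop :=
  S ⊆ A ∧ B ⊂ S ∧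
  (∀ v ∈ S \ B, ColorableOn G (S \ B)
      (Function.update (fun w => (k : ℤ) - degIn G A w + degIn G (S \ B) w) v 1)) ∧
  (∀ I : Finset V, I ⊆ S \ B → (I.card : ℤ) ≤ (k : ℤ) - 2 → Forbidding F G S I →
    ColorableOn G (S \ B)
      (fun w => (k : ℤ) - degIn G A w + degIn G (S \ B) w - if w ∈ I then 1 else 0))

/-- Weak `(F,k)`-boundary-reducibility, witnessed by the set `Fx = Fix(H)`. -/
def WeakBoundaryReducibleInWith {V : Type} [DecidableEq V]
    (F : Set ((W : Type) × SimpleGraph W)) (k : ℕ) (G : SimpleGraph V) [DecidableRel G.Adj]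
    (A S B Fx : Finset V) : Prop :=
  S ⊆ A ∧ B ⊂ S ∧ Fx.Nonempty ∧ Fx ⊆ S \ B ∧
  (∀ v ∈ Fx, ColorableOn G (S \ B)
      (Function.update (fun w => (k : ℤ) - degIn G A w + degIn G (S \ B) w) v 1)) ∧
  (∀ I : Finset V, I ⊆ S \ B → (I.card : ℤ) ≤ (k : ℤ) - 2 → Forbidding F G S I →
    ColorableOn G (S \ B)
      (fun w => (k : ℤ) - degIn G A w + degIn G (S \ B) w - if w ∈ I then 1 else 0))

/-- An `(F,k,b)`-resolution of `G`: nested induced subgraphs `G_i` of `G` on the vertex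
sets `A i`, where `G_i` is obtained from `G_{i-1}` by deleting `H_i - B_i` for an induced
`(F,k)`-boundary-reducible subgraph `H_i` (on vertex set `S i`) of `G_{i-1}`,
and the last graph `G_M` is itself reducible with empty boundary and has at most `b` vertices. -/
structure Resolution {V : Type} [Fintype V] [DecidableEq V]
    (F : Set ((W : Type) × SimpleGraph W)) (k b : ℕ)
    (G : SimpleGraph V) [DecidableRel G.Adj] where
  M : ℕ
  S : ℕ → Finset V
  B : ℕ → Finset V
  A : ℕ → Finset V
  hA0 : A 0 = Finset.univ
  hAstep : ∀ i, 1 ≤ i → i ≤ M → A i = A (i - 1) \ (S i \ B i)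
  avoid : ∀ p ∈ F, ¬ ContainsCopy G p
  red : ∀ i, 1 ≤ i → i ≤ M → BoundaryReducibleIn F k G (A (i - 1)) (S i) (B i)
  size : ∀ i, 1 ≤ i → i ≤ M → (S i \ B i).card ≤ b
  last : BoundaryReducibleIn F k G (A M) (A M) ∅
  lastsize : (A M).card ≤ b

/-- A weak `(F,k,b)`-resolution of `G`; `Fx i` is the set `Fix(H_i)` for the `i`-th
reducible subgraph (`1 ≤ i ≤ M`), and `Fx 0` is the `Fix` set of the last graph `G_M`. -/
structure WeakResolution {V : Type} [Fintype V] [DecidableEq V]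
    (F : Set ((W : Type) × SimpleGraph W)) (k b : ℕ)
    (G : SimpleGraph V) [DecidableRel G.Adj] where
  M : ℕ
  S : ℕ → Finset V
  B : ℕ → Finset V
  A : ℕ → Finset V
  Fx : ℕ → Finset V
  hA0 : A 0 = Finset.univ
  hAstep : ∀ i, 1 ≤ i → i ≤ M → A i = A (i - 1) \ (S i \ B i)
  avoid : ∀ p ∈ F, ¬ ContainsCopy G p
  red : ∀ i, 1 ≤ i → i ≤ M → WeakBoundaryReducibleInWith F k G (A (i - 1)) (S i) (B i) (Fx i)
  size : ∀ i, 1 ≤ i → i ≤ M → (S i \ B i).card ≤ b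
  last : WeakBoundaryReducibleInWith F k G (A M) (A M) ∅ (Fx 0)
  lastsize : (A M).card ≤ b

/-- `Fix(G)`: the union of the `Fix` sets of the reducible subgraphs of the resolution. -/
def WeakResolution.FixG {V : Type} [Fintype V] [DecidableEq V]
    {F : Set ((W : Type) × SimpleGraph W)} {k b : ℕ}
    {G : SimpleGraph V} [DecidableRel G.Adj] (R : WeakResolution F k b G) : Finset V :=
  (Finset.range (R.M + 1)).biUnion R.Fx

def F12 : Set ((W : Type) × SimpleGraph W) :=
  {⟨Fin 4, SimpleGraph.cycleGraph 4⟩, ⟨Fin 4, diamondGraph⟩,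
    ⟨Fin 5, bowtieGraph⟩, ⟨Fin 6, twoTrianglesEdgeGraph⟩}


section AuxColor

variable {V : Type} [DecidableEq V] (G : SimpleGraph V) [DecidableRel G.Adj]

omit [DecidableEq V] in
lemma degIn_mono {s t : Finset V} (h : s ⊆ t) (v : V) : degIn G s v ≤ degIn G t v :=
  Finset.card_le_card (Finset.filter_subset_filter _ h)

omit [DecidableEq V] in
lemma degIn_le_card (s : Finset V) (v : V) : degIn G s v ≤ s.card :=
  Finset.card_le_card (Finset.filter_subset _ _)

omit [DecidableEq V] in
lemma degIn_empty (v : V) : degIn G ∅ v = 0 := by simp [degIn]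

omit [DecidableEq V] in
lemma degIn_univ [Fintype V] (v : V) : degIn G Finset.univ v = G.degree v := by
  rw [SimpleGraph.degree, SimpleGraph.neighborFinset_eq_filter]
  rfl

lemma greedy (L : V → Finset ℕ) :
    ∀ l : List V, l.Nodup →
      (∀ l₁ (a : V) l₂, l = l₁ ++ a :: l₂ → degIn G l₂.toFinset a < (L a).card) →
      ∃ φ : V → ℕ, (∀ u ∈ l, φ u ∈ L u) ∧
        ∀ u ∈ l, ∀ w ∈ l, G.Adj u w → φ u ≠ φ w := by
  intro l
  induction l with
  | nil => exact fun _ _ => ⟨fun _ => 0, by simp, by simp⟩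
  | cons a l ih =>
    intro hnd h
    obtain ⟨φ, hφ1, hφ2⟩ := ih hnd.of_cons
      (fun l₁ b l₂ hl => h (a :: l₁) b l₂ (by simp [hl]))
    have hdeg : degIn G l.toFinset a < (L a).card := h [] a l rfl
    have himg : ((l.toFinset.filter fun w => G.Adj a w).image φ).card < (L a).card :=
      lt_of_le_of_lt Finset.card_image_le hdeg
    have hne : (L a \ (l.toFinset.filter fun w => G.Adj a w).image φ).Nonempty := by
      rw [Finset.sdiff_nonempty]
      intro hsub
      exact absurd (Finset.card_le_card hsub) (not_le.mpr himg)
    obtain ⟨c, hc⟩ := hne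
    rw [Finset.mem_sdiff] at hc
    have hal : a ∉ l := (List.nodup_cons.mp hnd).1
    refine ⟨Function.update φ a c, ?_, ?_⟩
    · intro u hu
      rcases List.mem_cons.mp hu with rfl | hu'
      · rw [Function.update_self]; exact hc.1
      · rw [Function.update_of_ne (fun (h : u = a) => hal (h ▸ hu'))]
        exact hφ1 u hu'
    · have key : ∀ x ∈ l, G.Adj a x → Function.update φ a c a ≠ Function.update φ a c x := by
        intro x hx hax
        rw [Function.update_self, Function.update_of_ne (fun (h : x = a) => hal (h ▸ hx))]
        intro hcx
        have hmem : φ x ∈ (l.toFinset.filter fun w => G.Adj a w).image φ :=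
          Finset.mem_image_of_mem φ (Finset.mem_filter.mpr ⟨List.mem_toFinset.mpr hx, hax⟩)
        rw [← hcx] at hmem
        exact hc.2 hmem
      intro u hu w hw hadj
      rcases List.mem_cons.mp hu with rfl | hu' <;> rcases List.mem_cons.mp hw with rfl | hw'
      · exact absurd hadj G.irrefl
      · exact key w hw' hadj
      · exact (key u hu' (G.adj_symm hadj)).symm
      · rw [Function.update_of_ne (fun (h : u = a) => hal (h ▸ hu')),
          Function.update_of_ne (fun (h : w = a) => hal (h ▸ hw'))]
        exact hφ2 u hu' w hw' hadj

lemma color_v_first (v : V) (A : Finset V) (hvA : v ∉ A) (L : V → Finset ℕ)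
    (hv : 1 ≤ (L v).card)
    (hu : ∀ u ∈ A, degIn G (insert v A) u < (L u).card) :
    ∃ φ : V → ℕ, (∀ w ∈ insert v A, φ w ∈ L w) ∧
      ∀ u ∈ insert v A, ∀ w ∈ insert v A, G.Adj u w → φ u ≠ φ w := by
  have hmem : ∀ x : V, x ∈ A.toList ++ [v] ↔ x ∈ insert v A := by
    intro x; simp [Finset.mem_insert, or_comm]
  have hnd : (A.toList ++ [v]).Nodup := by
    rw [List.nodup_append]
    refine ⟨A.nodup_toList, List.nodup_singleton v, ?_⟩
    intro x hx y hxv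
    rw [List.mem_singleton] at hxv
    subst hxv
    rintro rfl
    exact hvA (Finset.mem_toList.mp hx)
  have hyp : ∀ l₁ (a : V) l₂, A.toList ++ [v] = l₁ ++ a :: l₂ →
      degIn G l₂.toFinset a < (L a).card := by
    intro l₁ a l₂ hl
    have hcases : (a ∈ A.toList ∧ ∀ x ∈ l₂, x ∈ A.toList ∨ x = v) ∨ (a = v ∧ l₂ = []) := by
      rcases List.append_eq_append_iff.mp hl with ⟨a', ha1, ha2⟩ | ⟨c', hc1, hc2⟩
      · cases a' with
        | nil =>
          simp only [List.nil_append] at ha2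
          injection ha2 with e1 e2
          exact Or.inr ⟨e1.symm, e2.symm⟩
        | cons x xs => simp at ha2
      · cases c' with
        | nil =>
          simp only [List.nil_append] at hc2
          injection hc2 with e1 e2
          exact Or.inr ⟨e1, e2⟩
        | cons x xs =>
          injection hc2 with e1 e2
          refine Or.inl ⟨?_, ?_⟩
          · rw [e1, hc1]; simp
          · intro y hy
            rw [e2] at hy
            rcases List.mem_append.mp hy with h | h
            · left; rw [hc1]; simp [h]
            · right; exact List.mem_singleton.mp h
    rcases hcases with ⟨haA, hsub⟩ | ⟨rfl, rfl⟩
    · refine lt_of_le_of_lt (degIn_mono G ?_ a) (hu a (Finset.mem_toList.mp haA))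
      intro x hx
      rcases hsub x (List.mem_toFinset.mp hx) with h | rfl
      · exact Finset.mem_insert_of_mem (Finset.mem_toList.mp h)
      · exact Finset.mem_insert_self _ _
    · rw [show ([] : List V).toFinset = ∅ from rfl, degIn_empty]
      exact hv
  obtain ⟨φ, h1, h2⟩ := greedy G L (A.toList ++ [v]) hnd hyp
  exact ⟨φ, fun w hw => h1 w ((hmem w).mpr hw),
    fun u huu w hww hadj => h2 u ((hmem u).mpr huu) w ((hmem w).mpr hww) hadj⟩

lemma color_u0_first (v u0 : V) (A : Finset V) (hvA : v ∉ A) (hu0 : u0 ∈ A)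
    (L : V → Finset ℕ)
    (hLu0 : 1 ≤ (L u0).card) (hLv : 2 ≤ (L v).card)
    (hu : ∀ u ∈ A, u ≠ u0 → degIn G (insert v A) u < (L u).card) :
    ∃ φ : V → ℕ, (∀ w ∈ insert v A, φ w ∈ L w) ∧
      ∀ u ∈ insert v A, ∀ w ∈ insert v A, G.Adj u w → φ u ≠ φ w := by
  have hvu0 : v ≠ u0 := fun h => hvA (h ▸ hu0)
  have hmem : ∀ x : V, x ∈ (A.erase u0).toList ++ [v, u0] ↔ x ∈ insert v A := by
    intro x
    simp only [List.mem_append, Finset.mem_toList, Finset.mem_erase, List.mem_cons,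
      List.mem_singleton, Finset.mem_insert, List.not_mem_nil, or_false]
    constructor
    · rintro (⟨_, h⟩ | rfl | rfl)
      · exact Or.inr h
      · exact Or.inl rfl
      · exact Or.inr hu0
    · rintro (rfl | h)
      · exact Or.inr (Or.inl rfl)
      · by_cases hx : x = u0
        · exact Or.inr (Or.inr hx)
        · exact Or.inl ⟨hx, h⟩
  have hnd : ((A.erase u0).toList ++ [v, u0]).Nodup := by
    rw [List.nodup_append]
    refine ⟨Finset.nodup_toList _, by simp [hvu0], ?_⟩
    intro x hx y hx2
    have hxA : x ∈ A.erase u0 := Finset.mem_toList.mp hx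
    rcases List.mem_cons.mp hx2 with rfl | hx3
    · exact fun h => hvA (by rw [← h]; exact Finset.mem_of_mem_erase hxA)
    · rw [List.mem_singleton] at hx3
      exact fun h => (Finset.mem_erase.mp hxA).1 (h.trans hx3)
  have hyp : ∀ l₁ (a : V) l₂, (A.erase u0).toList ++ [v, u0] = l₁ ++ a :: l₂ →
      degIn G l₂.toFinset a < (L a).card := by
    intro l₁ a l₂ hl
    have hcases : (a ∈ (A.erase u0).toList ∧ ∀ x ∈ l₂, x ∈ insert v A)
        ∨ (a = v ∧ l₂ = [u0]) ∨ (a = u0 ∧ l₂ = []) := by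
      rcases List.append_eq_append_iff.mp hl with ⟨a', ha1, ha2⟩ | ⟨c', hc1, hc2⟩
      · match a', ha2 with
        | [], ha2 =>
          simp only [List.nil_append] at ha2
          injection ha2 with e1 e2
          exact Or.inr (Or.inl ⟨e1.symm, e2.symm⟩)
        | [x], ha2 =>
          simp only [List.cons_append, List.nil_append] at ha2
          injection ha2 with e1 e2
          injection e2 with e3 e4
          exact Or.inr (Or.inr ⟨e3.symm, e4.symm⟩)
        | x :: y :: xs, ha2 => simp at ha2
      · cases c' with
        | nil =>
          simp only [List.nil_append] at hc2
          injection hc2 with e1 e2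
          exact Or.inr (Or.inl ⟨e1, e2⟩)
        | cons x xs =>
          injection hc2 with e1 e2
          refine Or.inl ⟨?_, ?_⟩
          · rw [e1, hc1]; simp
          · intro y hy
            rw [e2] at hy
            rcases List.mem_append.mp hy with h | h
            · have hyl : y ∈ (A.erase u0).toList := by
                rw [hc1]
                exact List.mem_append_right _ (List.mem_cons_of_mem x h)
              exact Finset.mem_insert_of_mem (Finset.mem_of_mem_erase
                (Finset.mem_toList.mp hyl))
            · rcases List.mem_cons.mp h with rfl | h'
              · exact Finset.mem_insert_self _ _
              · rw [List.mem_singleton] at h'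
                exact h' ▸ Finset.mem_insert_of_mem hu0
    rcases hcases with ⟨haA, hsub⟩ | ⟨hav, rfl⟩ | ⟨hau, rfl⟩
    · have haA' := Finset.mem_toList.mp haA
      refine lt_of_le_of_lt (degIn_mono G ?_ a)
        (hu a (Finset.mem_of_mem_erase haA') (Finset.mem_erase.mp haA').1)
      intro x hx
      exact hsub x (List.mem_toFinset.mp hx)
    · rw [hav]
      calc degIn G [u0].toFinset v ≤ [u0].toFinset.card := degIn_le_card G _ v
        _ ≤ 1 := by simp
        _ < 2 := one_lt_two
        _ ≤ (L v).card := hLv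
    · rw [hau, show ([] : List V).toFinset = ∅ from rfl, degIn_empty]
      exact hLu0
  obtain ⟨φ, h1, h2⟩ := greedy G L ((A.erase u0).toList ++ [v, u0]) hnd hyp
  exact ⟨φ, fun w hw => h1 w ((hmem w).mpr hw),
    fun u huu w hww hadj => h2 u ((hmem u).mpr huu) w ((hmem w).mpr hww) hadj⟩

end AuxColor

section AuxCopy

variable {V : Type} (G : SimpleGraph V) (S I : Finset V)

set_option maxHeartbeats 2000000 in
lemma copy_c4 (u v u' : V)
    (hu : u ∈ S) (hv : v ∈ S) (hu' : u' ∈ S) (huI : u ∈ I) (hu'I : u' ∈ I)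
    (h1 : G.Adj v u) (h2 : G.Adj v u') (hne : u ≠ u') :
    ContainsCopy (apexGraph G S I) ⟨Fin 4, SimpleGraph.cycleGraph 4⟩ := by
  refine ⟨⟨![Sum.inr (), Sum.inl ⟨u, hu⟩, Sum.inl ⟨v, hv⟩, Sum.inl ⟨u', hu'⟩], ?_⟩, ?_⟩
  · intro a b hab
    replace hab : (SimpleGraph.cycleGraph 4).Adj a b := hab
    fin_cases a <;> fin_cases b <;>
      first
        | (exfalso; revert hab; decide)
        | exact huI | exact hu'I
        | exact h1 | exact h1.symm | exact h2 | exact h2.symm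
  · have g1 : u ≠ v := (G.ne_of_adj h1).symm
    have g2 : u' ≠ v := (G.ne_of_adj h2).symm
    intro a b hab
    replace hab : (![Sum.inr (), Sum.inl ⟨u, hu⟩, Sum.inl ⟨v, hv⟩, Sum.inl ⟨u', hu'⟩] :
        Fin 4 → ({x // x ∈ S} ⊕ Unit)) a
        = ![Sum.inr (), Sum.inl ⟨u, hu⟩, Sum.inl ⟨v, hv⟩, Sum.inl ⟨u', hu'⟩] b := hab
    fin_cases a <;> fin_cases b <;> simp_all

set_option maxHeartbeats 2000000 in
lemma copy_diamond (v u w : V)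
    (hv : v ∈ S) (hu : u ∈ S) (hw : w ∈ S) (hvI : v ∈ I) (huI : u ∈ I)
    (hvu : G.Adj v u) (hvw : G.Adj v w) (huw : G.Adj u w) :
    ContainsCopy (apexGraph G S I) ⟨Fin 4, diamondGraph⟩ := by
  refine ⟨⟨![Sum.inl ⟨v, hv⟩, Sum.inl ⟨u, hu⟩, Sum.inl ⟨w, hw⟩, Sum.inr ()], ?_⟩, ?_⟩
  · intro a b hab
    replace hab : diamondGraph.Adj a b := hab
    fin_cases a <;> fin_cases b <;>
      first
        | (revert hab; simp [diamondGraph]; done)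
        | exact hvu | exact hvu.symm | exact hvw | exact hvw.symm
        | exact huw | exact huw.symm | exact hvI | exact huI
  · have h1 : v ≠ u := G.ne_of_adj hvu
    have h2 : v ≠ w := G.ne_of_adj hvw
    have h3 : u ≠ w := G.ne_of_adj huw
    intro a b hab
    replace hab : (![Sum.inl ⟨v, hv⟩, Sum.inl ⟨u, hu⟩, Sum.inl ⟨w, hw⟩, Sum.inr ()] :
        Fin 4 → ({x // x ∈ S} ⊕ Unit)) a = ![Sum.inl ⟨v, hv⟩, Sum.inl ⟨u, hu⟩,
        Sum.inl ⟨w, hw⟩, Sum.inr ()] b := hab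
    fin_cases a <;> fin_cases b <;> simp_all

set_option maxHeartbeats 2000000 in
lemma copy_bowtie (s t p q : V)
    (hs : s ∈ S) (ht : t ∈ S) (hp : p ∈ S) (hq : q ∈ S) (hsI : s ∈ I) (htI : t ∈ I)
    (hst : G.Adj s t) (hsp : G.Adj s p) (hsq : G.Adj s q) (hpq : G.Adj p q)
    (htp : t ≠ p) (htq : t ≠ q) :
    ContainsCopy (apexGraph G S I) ⟨Fin 5, bowtieGraph⟩ := by
  refine ⟨⟨![Sum.inl ⟨s, hs⟩, Sum.inr (), Sum.inl ⟨t, ht⟩, Sum.inl ⟨p, hp⟩,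
    Sum.inl ⟨q, hq⟩], ?_⟩, ?_⟩
  · intro a b hab
    replace hab : bowtieGraph.Adj a b := hab
    fin_cases a <;> fin_cases b <;>
      first
        | (revert hab; simp [bowtieGraph]; done)
        | exact hst | exact hst.symm | exact hsp | exact hsp.symm
        | exact hsq | exact hsq.symm | exact hpq | exact hpq.symm
        | exact hsI | exact htI
  · have h1 : s ≠ t := G.ne_of_adj hst
    have h2 : s ≠ p := G.ne_of_adj hsp
    have h3 : s ≠ q := G.ne_of_adj hsq
    have h4 : p ≠ q := G.ne_of_adj hpq
    intro a b hab
    replace hab : (![Sum.inl ⟨s, hs⟩, Sum.inr (), Sum.inl ⟨t, ht⟩, Sum.inl ⟨p, hp⟩,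
        Sum.inl ⟨q, hq⟩] : Fin 5 → ({x // x ∈ S} ⊕ Unit)) a
        = ![Sum.inl ⟨s, hs⟩, Sum.inr (), Sum.inl ⟨t, ht⟩, Sum.inl ⟨p, hp⟩,
        Sum.inl ⟨q, hq⟩] b := hab
    fin_cases a <;> fin_cases b <;> simp_all

@[simp] lemma cons_val_five {α : Type*} {m : ℕ} (x : α) (u : Fin m.succ.succ.succ.succ.succ → α) :
    Matrix.vecCons x u 5 = Matrix.vecHead (Matrix.vecTail (Matrix.vecTail (Matrix.vecTail (Matrix.vecTail u)))) :=
  rfl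

set_option maxHeartbeats 2000000 in
lemma copy_2te (v u a b c : V)
    (hv : v ∈ S) (hu : u ∈ S) (ha : a ∈ S) (hb : b ∈ S) (hc : c ∈ S)
    (hvI : v ∈ I) (huI : u ∈ I)
    (hvu : G.Adj v u) (hva : G.Adj v a) (hab : G.Adj a b) (hbc : G.Adj b c)
    (hac : G.Adj a c)
    (hub : u ≠ b) (huc : u ≠ c) (hua : u ≠ a) (hvb : v ≠ b) (hvc : v ≠ c) :
    ContainsCopy (apexGraph G S I) ⟨Fin 6, twoTrianglesEdgeGraph⟩ := by
  refine ⟨⟨![Sum.inl ⟨v, hv⟩, Sum.inr (), Sum.inl ⟨u, hu⟩, Sum.inl ⟨a, ha⟩,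
    Sum.inl ⟨b, hb⟩, Sum.inl ⟨c, hc⟩], ?_⟩, ?_⟩
  · intro x y hxy
    replace hxy : twoTrianglesEdgeGraph.Adj x y := hxy
    fin_cases x <;> fin_cases y <;>
      first
        | (revert hxy; simp [twoTrianglesEdgeGraph]; done)
        | exact hvu | exact hvu.symm | exact hva | exact hva.symm
        | exact hab | exact hab.symm | exact hbc | exact hbc.symm
        | exact hac | exact hac.symm | exact hvI | exact huI
  · have h1 : v ≠ u := G.ne_of_adj hvu
    have h2 : v ≠ a := G.ne_of_adj hva
    have h3 : a ≠ b := G.ne_of_adj hab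
    have h4 : b ≠ c := G.ne_of_adj hbc
    have h5 : a ≠ c := G.ne_of_adj hac
    intro x y hxy
    replace hxy : (![Sum.inl ⟨v, hv⟩, Sum.inr (), Sum.inl ⟨u, hu⟩, Sum.inl ⟨a, ha⟩,
        Sum.inl ⟨b, hb⟩, Sum.inl ⟨c, hc⟩] : Fin 6 → ({x // x ∈ S} ⊕ Unit)) x
        = ![Sum.inl ⟨v, hv⟩, Sum.inr (), Sum.inl ⟨u, hu⟩, Sum.inl ⟨a, ha⟩,
        Sum.inl ⟨b, hb⟩, Sum.inl ⟨c, hc⟩] y := hxy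
    fin_cases x <;> fin_cases y <;> simp_all

end AuxCopy

theorem rc3_reducible {V : Type} [Fintype V] [DecidableEq V]
    (G : SimpleGraph V) [DecidableRel G.Adj]
    (v w1 w2 w3 : V)
    (htri : IsTriangle G w1 w2 w3)
    (hnear : v = w1 ∨ v = w2 ∨ v = w3 ∨ G.Adj v w1 ∨ G.Adj v w2 ∨ G.Adj v w3)
    (havoid : ∀ p ∈ F12, ¬ ContainsCopy G p)
    (A : Finset V) (hA : A = (G.neighborFinset v).filter fun u => G.degree u = 3)
    (hcard : A.card + 2 = G.degree v) :
    BoundaryReducibleIn F12 4 G Finset.univ (insert v A ∪ {w1, w2, w3})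
      ((insert v A ∪ {w1, w2, w3}) \ insert v A) := by
  obtain ⟨h12, h23, h13⟩ := htri
  have hvA : v ∉ A := by
    rw [hA]
    simp
  have hadj : ∀ u ∈ A, G.Adj v u := by
    intro u hu
    rw [hA] at hu
    exact (G.mem_neighborFinset v u).mp (Finset.mem_filter.mp hu).1
  have hdeg3 : ∀ u ∈ A, G.degree u = 3 := by
    intro u hu
    rw [hA] at hu
    exact (Finset.mem_filter.mp hu).2
  set T := insert v A with hT
  set S := T ∪ {w1, w2, w3} with hS
  have hvT : v ∈ T := Finset.mem_insert_self v A
  have hTS : T ⊆ S := Finset.subset_union_left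
  have hvS : v ∈ S := hTS hvT
  have hw1S : w1 ∈ S := Finset.mem_union_right _ (by simp)
  have hw2S : w2 ∈ S := Finset.mem_union_right _ (by simp)
  have hw3S : w3 ∈ S := Finset.mem_union_right _ (by simp)
  have hsb : S \ (S \ T) = T := by
    rw [sdiff_sdiff_right_self]
    exact inf_eq_right.mpr hTS
  have hdegvT : degIn G T v = A.card := by
    have hfil : T.filter (fun w => G.Adj v w) = A := by
      ext x
      simp only [Finset.mem_filter, hT, Finset.mem_insert]
      constructor
      · rintro ⟨rfl | hx, hadjx⟩
        · exact absurd hadjx G.irrefl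
        · exact hx
      · intro hx
        exact ⟨Or.inr hx, hadj x hx⟩
    rw [degIn, hfil]
  refine ⟨Finset.subset_univ _, ?_, ?_, ?_⟩
  · rw [Finset.ssubset_iff_of_subset Finset.sdiff_subset]
    exact ⟨v, hvS, by simp [hvT]⟩
  · -- FIX
    intro x hx
    rw [hsb] at hx ⊢
    intro L hL
    by_cases hxv : x = v
    · subst hxv
      refine color_v_first G x A hvA L ?_ ?_
      · have h1 := hL x hvT
        rw [Function.update_self] at h1
        exact_mod_cast h1
      · intro u hu
        have h1 := hL u (Finset.mem_insert_of_mem hu)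
        simp only [Function.update_of_ne (fun (h : u = x) => hvA (h ▸ hu))] at h1
        rw [degIn_univ, hdeg3 u hu] at h1
        rw [← hT]
        omega
    · have hxA : x ∈ A := (Finset.mem_insert.mp hx).resolve_left hxv
      refine color_u0_first G v x A hvA hxA L ?_ ?_ ?_
      · have h1 := hL x hx
        rw [Function.update_self] at h1
        exact_mod_cast h1
      · have h1 := hL v hvT
        simp only [Function.update_of_ne (fun h => hxv h.symm)] at h1
        rw [degIn_univ, ← hcard, hdegvT] at h1
        omega
      · intro u hu hune
        have h1 := hL u (Finset.mem_insert_of_mem hu)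
        simp only [Function.update_of_ne hune] at h1
        rw [degIn_univ, hdeg3 u hu] at h1
        rw [← hT]
        omega
  · -- FORB
    intro I hI hIc hforb
    rw [hsb] at hI ⊢
    by_cases hvI : v ∈ I
    · have hIv : ∀ y ∈ I, y = v := by
        intro y hy
        by_contra hyne
        have hyA : y ∈ A := (Finset.mem_insert.mp (hI hy)).resolve_left hyne
        have hvy : G.Adj v y := hadj y hyA
        have hyS : y ∈ S := hTS (Finset.mem_insert_of_mem hyA)
        have diamond : ∀ w : V, w ∈ S → G.Adj v w → G.Adj y w → False := by
          intro w hwS hvw hyw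
          exact hforb ⟨Fin 4, diamondGraph⟩ (by simp [F12])
            (copy_diamond G S I v y w hvS hyS hwS hvI hy hvy hvw hyw)
        have bowtie1 : ∀ p q : V, p ∈ S → q ∈ S → G.Adj v p → G.Adj v q → G.Adj p q →
            y ≠ p → y ≠ q → False := by
          intro p q hpS hqS hvp hvq hpq hyp hyq
          exact hforb ⟨Fin 5, bowtieGraph⟩ (by simp [F12])
            (copy_bowtie G S I v y p q hvS hyS hpS hqS hvI hy hvy hvp hvq hpq hyp hyq)
        have bowtie2 : ∀ p q : V, p ∈ S → q ∈ S → G.Adj y p → G.Adj y q → G.Adj p q →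
            v ≠ p → v ≠ q → False := by
          intro p q hpS hqS hyp hyq hpq hvp hvq
          exact hforb ⟨Fin 5, bowtieGraph⟩ (by simp [F12])
            (copy_bowtie G S I y v p q hyS hvS hpS hqS hy hvI hvy.symm hyp hyq hpq hvp hvq)
        by_cases hvW : v = w1 ∨ v = w2 ∨ v = w3
        · by_cases hyW : y = w1 ∨ y = w2 ∨ y = w3
          · rcases hvW with hv1 | hv2 | hv3 <;> rcases hyW with hy1 | hy2 | hy3
            · exact hyne (hy1.trans hv1.symm)
            · exact diamond w3 hw3S (by rw [hv1]; exact h13) (by rw [hy2]; exact h23)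
            · exact diamond w2 hw2S (by rw [hv1]; exact h12) (by rw [hy3]; exact h23.symm)
            · exact diamond w3 hw3S (by rw [hv2]; exact h23) (by rw [hy1]; exact h13)
            · exact hyne (hy2.trans hv2.symm)
            · exact diamond w1 hw1S (by rw [hv2]; exact h12.symm) (by rw [hy3]; exact h13.symm)
            · exact diamond w2 hw2S (by rw [hv3]; exact h23.symm) (by rw [hy1]; exact h12)
            · exact diamond w1 hw1S (by rw [hv3]; exact h13.symm) (by rw [hy2]; exact h12.symm)
            · exact hyne (hy3.trans hv3.symm)
          · push_neg at hyW
            obtain ⟨hy1, hy2, hy3⟩ := hyW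
            rcases hvW with hv1 | hv2 | hv3
            · exact bowtie1 w2 w3 hw2S hw3S (by rw [hv1]; exact h12) (by rw [hv1]; exact h13)
                h23 hy2 hy3
            · exact bowtie1 w1 w3 hw1S hw3S (by rw [hv2]; exact h12.symm) (by rw [hv2]; exact h23)
                h13 hy1 hy3
            · exact bowtie1 w1 w2 hw1S hw2S (by rw [hv3]; exact h13.symm) (by rw [hv3]; exact h23.symm)
                h12 hy1 hy2
        · push_neg at hvW
          obtain ⟨hv1, hv2, hv3⟩ := hvW
          by_cases hyW : y = w1 ∨ y = w2 ∨ y = w3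
          · rcases hyW with hy1 | hy2 | hy3
            · exact bowtie2 w2 w3 hw2S hw3S (by rw [hy1]; exact h12) (by rw [hy1]; exact h13)
                h23 hv2 hv3
            · exact bowtie2 w1 w3 hw1S hw3S (by rw [hy2]; exact h12.symm) (by rw [hy2]; exact h23)
                h13 hv1 hv3
            · exact bowtie2 w1 w2 hw1S hw2S (by rw [hy3]; exact h13.symm) (by rw [hy3]; exact h23.symm)
                h12 hv1 hv2
          · push_neg at hyW
            obtain ⟨hy1, hy2, hy3⟩ := hyW
            have twoT : ∀ a b c : V, a ∈ S → b ∈ S → c ∈ S → G.Adj v a → G.Adj a b →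
                G.Adj b c → G.Adj a c → y ≠ b → y ≠ c → y ≠ a → v ≠ b → v ≠ c → False := by
              intro a b c haS hbS hcS hva hab hbc hac hub huc hua hvb hvc
              exact hforb ⟨Fin 6, twoTrianglesEdgeGraph⟩ (by simp [F12])
                (copy_2te G S I v y a b c hvS hyS haS hbS hcS hvI hy hvy hva hab hbc hac
                  hub huc hua hvb hvc)
            rcases hnear with h | h | h | h | h | h
            · exact hv1 h
            · exact hv2 h
            · exact hv3 h
            · exact twoT w1 w2 w3 hw1S hw2S hw3S h h12 h23 h13 hy2 hy3 hy1 hv2 hv3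
            · exact twoT w2 w1 w3 hw2S hw1S hw3S h h12.symm h13 h23 hy1 hy3 hy2 hv1 hv3
            · exact twoT w3 w1 w2 hw3S hw1S hw2S h h13.symm h12 h23.symm hy1 hy2 hy3 hv1 hv2
      intro L hL
      refine color_v_first G v A hvA L ?_ ?_
      · have h1 := hL v hvT
        simp only [if_pos hvI] at h1
        rw [degIn_univ, ← hcard, hdegvT] at h1
        omega
      · intro u hu
        have huI : u ∉ I := fun h => hvA ((hIv u h : u = v) ▸ hu)
        have h1 := hL u (Finset.mem_insert_of_mem hu)
        simp only [if_neg huI, sub_zero] at h1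
        rw [degIn_univ, hdeg3 u hu] at h1
        rw [← hT]
        omega
    · have hIA : I ⊆ A := fun y hy =>
        (Finset.mem_insert.mp (hI hy)).resolve_left (fun (h : y = v) => hvI (h ▸ hy))
      have hcard1 : I.card ≤ 1 := by
        by_contra hgt
        obtain ⟨u, hu, u', hu', hne⟩ := Finset.one_lt_card.mp (not_le.mp hgt)
        exact hforb ⟨Fin 4, SimpleGraph.cycleGraph 4⟩ (by simp [F12])
          (copy_c4 G S I u v u' (hTS (Finset.mem_insert_of_mem (hIA hu))) hvS
            (hTS (Finset.mem_insert_of_mem (hIA hu'))) hu hu'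
            (hadj u (hIA hu)) (hadj u' (hIA hu')) hne)
      rcases Finset.eq_empty_or_nonempty I with rfl | ⟨u1, hu1⟩
      · intro L hL
        refine color_v_first G v A hvA L ?_ ?_
        · have h1 := hL v hvT
          simp only [Finset.notMem_empty, if_false, sub_zero] at h1
          rw [degIn_univ, ← hcard, hdegvT] at h1
          omega
        · intro u hu
          have h1 := hL u (Finset.mem_insert_of_mem hu)
          simp only [Finset.notMem_empty, if_false, sub_zero] at h1
          rw [degIn_univ, hdeg3 u hu] at h1
          rw [← hT]
          omega
      · have hIu1 : ∀ y ∈ I, y = u1 := fun y hy => Finset.card_le_one.mp hcard1 y hy u1 hu1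
        have hu1A : u1 ∈ A := hIA hu1
        intro L hL
        refine color_u0_first G v u1 A hvA hu1A L ?_ ?_ ?_
        · have h1 := hL u1 (Finset.mem_insert_of_mem hu1A)
          simp only [if_pos hu1] at h1
          have hd1 : 1 ≤ degIn G T u1 :=
            Finset.card_pos.mpr ⟨v, Finset.mem_filter.mpr ⟨hvT, (hadj u1 hu1A).symm⟩⟩
          rw [degIn_univ, hdeg3 u1 hu1A] at h1
          omega
        · have h1 := hL v hvT
          simp only [if_neg hvI, sub_zero] at h1
          rw [degIn_univ, ← hcard, hdegvT] at h1
          omega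
        · intro u hu hne
          have huI : u ∉ I := fun h => hne (hIu1 u h)
          have h1 := hL u (Finset.mem_insert_of_mem hu)
          simp only [if_neg huI, sub_zero] at h1
          rw [degIn_univ, hdeg3 u hu] at h1
          rw [← hT]
          omega
end

section
/- Let G be a graph containing a path v1,v2,v3,v4 of four consecutive vertices each of degree 4 in G. Then the subgraph induced by {v1,v2,v3,v4} is (∅,5)-boundary-reducible with empty boundary. -/
open Finset

lemma pick_avoid (s t : Finset ℕ) (h : t.card < s.card) : ∃ x ∈ s, x ∉ t := by
  by_contra hc
  push_neg at hc
  exact absurd (Finset.card_le_card hc) (not_le.mpr h)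

lemma greedy4 {V : Type} [DecidableEq V] (G : SimpleGraph V) [DecidableRel G.Adj]
    (T : Finset V) (a b c d : V)
    (hT : ∀ x, x ∈ T ↔ x = a ∨ x = b ∨ x = c ∨ x = d)
    (hab : a ≠ b) (hac : a ≠ c) (had : a ≠ d)
    (hbc : b ≠ c) (hbd : b ≠ d) (hcd : c ≠ d)
    (L : V → Finset ℕ)
    (ha : 0 < (L a).card)
    (hb : (if G.Adj b a then 1 else 0) < (L b).card)
    (hc : ((if G.Adj c a then 1 else 0) + if G.Adj c b then 1 else 0) < (L c).card)
    (hd : ((if G.Adj d a then 1 else 0) + (if G.Adj d b then 1 else 0)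
        + if G.Adj d c then 1 else 0) < (L d).card) :
    ∃ φ : V → ℕ, (∀ v ∈ T, φ v ∈ L v) ∧ ∀ u ∈ T, ∀ v ∈ T, G.Adj u v → φ u ≠ φ v := by
  obtain ⟨c1, hm1⟩ := Finset.card_pos.mp ha
  obtain ⟨c2, hm2, hn2⟩ := pick_avoid (L b) (if G.Adj b a then {c1} else ∅)
    (lt_of_le_of_lt (by by_cases h : G.Adj b a <;> simp [h]) hb)
  obtain ⟨c3, hm3, hn3⟩ := pick_avoid (L c)
    ((if G.Adj c a then {c1} else ∅) ∪ (if G.Adj c b then {c2} else ∅))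
    (lt_of_le_of_lt (le_trans (Finset.card_union_le _ _)
      (add_le_add (by by_cases h : G.Adj c a <;> simp [h])
        (by by_cases h : G.Adj c b <;> simp [h]))) hc)
  obtain ⟨c4, hm4, hn4⟩ := pick_avoid (L d)
    (((if G.Adj d a then {c1} else ∅) ∪ (if G.Adj d b then {c2} else ∅))
      ∪ (if G.Adj d c then {c3} else ∅))
    (lt_of_le_of_lt (le_trans (Finset.card_union_le _ _)
      (add_le_add (le_trans (Finset.card_union_le _ _)
        (add_le_add (by by_cases h : G.Adj d a <;> simp [h])
          (by by_cases h : G.Adj d b <;> simp [h])))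
        (by by_cases h : G.Adj d c <;> simp [h]))) hd)
  have g21 : G.Adj b a → c2 ≠ c1 := by
    intro h e; apply hn2; rw [e, if_pos h]; exact Finset.mem_singleton_self c1
  have g31 : G.Adj c a → c3 ≠ c1 := by
    intro h e; apply hn3; rw [e]
    exact Finset.mem_union_left _ (by rw [if_pos h]; exact Finset.mem_singleton_self c1)
  have g32 : G.Adj c b → c3 ≠ c2 := by
    intro h e; apply hn3; rw [e]
    exact Finset.mem_union_right _ (by rw [if_pos h]; exact Finset.mem_singleton_self c2)
  have g41 : G.Adj d a → c4 ≠ c1 := by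
    intro h e; apply hn4; rw [e]
    exact Finset.mem_union_left _ (Finset.mem_union_left _
      (by rw [if_pos h]; exact Finset.mem_singleton_self c1))
  have g42 : G.Adj d b → c4 ≠ c2 := by
    intro h e; apply hn4; rw [e]
    exact Finset.mem_union_left _ (Finset.mem_union_right _
      (by rw [if_pos h]; exact Finset.mem_singleton_self c2))
  have g43 : G.Adj d c → c4 ≠ c3 := by
    intro h e; apply hn4; rw [e]
    exact Finset.mem_union_right _ (by rw [if_pos h]; exact Finset.mem_singleton_self c3)
  refine ⟨fun x => if x = a then c1 else if x = b then c2 else if x = c then c3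
    else if x = d then c4 else 0, ?_, ?_⟩
  · intro v hv
    rcases (hT v).1 hv with rfl | rfl | rfl | rfl <;>
      simp [Ne.symm hab, Ne.symm hac, Ne.symm had, Ne.symm hbc, Ne.symm hbd, Ne.symm hcd,
        hm1, hm2, hm3, hm4]
  · intro x hx y hy hadj
    rcases (hT x).1 hx with rfl | rfl | rfl | rfl <;>
      rcases (hT y).1 hy with rfl | rfl | rfl | rfl <;>
      simp only [if_pos rfl, if_neg (Ne.symm hab), if_neg (Ne.symm hac), if_neg (Ne.symm had),
        if_neg (Ne.symm hbc), if_neg (Ne.symm hbd), if_neg (Ne.symm hcd)] <;>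
      first
      | exact absurd hadj G.irrefl
      | exact g21 hadj
      | exact fun e => g21 hadj.symm e.symm
      | exact g31 hadj
      | exact fun e => g31 hadj.symm e.symm
      | exact g32 hadj
      | exact fun e => g32 hadj.symm e.symm
      | exact g41 hadj
      | exact fun e => g41 hadj.symm e.symm
      | exact g42 hadj
      | exact fun e => g42 hadj.symm e.symm
      | exact g43 hadj
      | exact fun e => g43 hadj.symm e.symm

set_option maxHeartbeats 2000000

theorem path4_reducible {V : Type} [Fintype V] [DecidableEq V]
    (G : SimpleGraph V) [DecidableRel G.Adj]
    (v1 v2 v3 v4 : V)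
    (h12 : G.Adj v1 v2) (h23 : G.Adj v2 v3) (h34 : G.Adj v3 v4)
    (h13 : v1 ≠ v3) (h14 : v1 ≠ v4) (h24 : v2 ≠ v4)
    (hd1 : G.degree v1 = 4) (hd2 : G.degree v2 = 4) (hd3 : G.degree v3 = 4)
    (hd4 : G.degree v4 = 4) :
    BoundaryReducibleIn (∅ : Set ((W : Type) × SimpleGraph W)) 5 G Finset.univ
      {v1, v2, v3, v4} ∅ := by
  have n12 : v1 ≠ v2 := h12.ne
  have n23 : v2 ≠ v3 := h23.ne
  have n34 : v3 ≠ v4 := h34.ne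
  have n13 : v1 ≠ v3 := h13
  have n14 : v1 ≠ v4 := h14
  have n24 : v2 ≠ v4 := h24
  have huniv : ∀ t : V, degIn G (univ : Finset V) t = G.degree t := by
    intro t
    simp [degIn, SimpleGraph.degree, SimpleGraph.neighborFinset_eq_filter]
  have hquad : ∀ t : V, degIn G ({v1, v2, v3, v4} : Finset V) t =
      (if G.Adj t v1 then 1 else 0) + ((if G.Adj t v2 then 1 else 0)
        + ((if G.Adj t v3 then 1 else 0) + (if G.Adj t v4 then 1 else 0))) := by
    intro t
    rw [degIn, Finset.card_filter]
    rw [Finset.sum_insert (by simp [n12, n13, n14]),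
      Finset.sum_insert (by simp [n23, n24]),
      Finset.sum_insert (by simp [n34]), Finset.sum_singleton]
  have hcardS : ({v1, v2, v3, v4} : Finset V).card = 4 := by
    rw [Finset.card_insert_of_notMem (by simp [n12, n13, n14]),
      Finset.card_insert_of_notMem (by simp [n23, n24]),
      Finset.card_insert_of_notMem (by simp [n34]), Finset.card_singleton]
  have hT1234 : ∀ x, x ∈ ({v1, v2, v3, v4} : Finset V) ↔ x = v1 ∨ x = v2 ∨ x = v3 ∨ x = v4 := by
    intro x
    rw [Finset.mem_insert, Finset.mem_insert, Finset.mem_insert, Finset.mem_singleton]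
  have hT2134 : ∀ x, x ∈ ({v1, v2, v3, v4} : Finset V) ↔ x = v2 ∨ x = v1 ∨ x = v3 ∨ x = v4 := by
    intro x
    rw [Finset.mem_insert, Finset.mem_insert, Finset.mem_insert, Finset.mem_singleton]
    tauto
  have hT3124 : ∀ x, x ∈ ({v1, v2, v3, v4} : Finset V) ↔ x = v3 ∨ x = v1 ∨ x = v2 ∨ x = v4 := by
    intro x
    rw [Finset.mem_insert, Finset.mem_insert, Finset.mem_insert, Finset.mem_singleton]
    tauto
  have hT4123 : ∀ x, x ∈ ({v1, v2, v3, v4} : Finset V) ↔ x = v4 ∨ x = v1 ∨ x = v2 ∨ x = v3 := by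
    intro x
    rw [Finset.mem_insert, Finset.mem_insert, Finset.mem_insert, Finset.mem_singleton]
    tauto
  have hT4321 : ∀ x, x ∈ ({v1, v2, v3, v4} : Finset V) ↔ x = v4 ∨ x = v3 ∨ x = v2 ∨ x = v1 := by
    intro x
    rw [Finset.mem_insert, Finset.mem_insert, Finset.mem_insert, Finset.mem_singleton]
    tauto
  have hT4312 : ∀ x, x ∈ ({v1, v2, v3, v4} : Finset V) ↔ x = v4 ∨ x = v3 ∨ x = v1 ∨ x = v2 := by
    intro x
    rw [Finset.mem_insert, Finset.mem_insert, Finset.mem_insert, Finset.mem_singleton]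
    tauto
  have hT1243 : ∀ x, x ∈ ({v1, v2, v3, v4} : Finset V) ↔ x = v1 ∨ x = v2 ∨ x = v4 ∨ x = v3 := by
    intro x
    rw [Finset.mem_insert, Finset.mem_insert, Finset.mem_insert, Finset.mem_singleton]
    tauto
  refine ⟨Finset.subset_univ _, Finset.empty_ssubset.mpr ⟨v1, by simp⟩, ?_, ?_⟩
  · -- FIX
    simp only [Finset.sdiff_empty]
    intro v hv L hL
    have H1 := hL v1 (by simp)
    have H2 := hL v2 (by simp)
    have H3 := hL v3 (by simp)
    have H4 := hL v4 (by simp)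
    simp only [Function.update_apply] at H1 H2 H3 H4
    rw [huniv v1, hd1, hquad v1] at H1
    rw [huniv v2, hd2, hquad v2] at H2
    rw [huniv v3, hd3, hquad v3] at H3
    rw [huniv v4, hd4, hquad v4] at H4
    simp only [Finset.mem_insert, Finset.mem_singleton] at hv
    rcases hv with h | h | h | h <;> subst v
    · rw [if_pos rfl] at H1
      rw [if_neg n12.symm] at H2
      rw [if_neg n13.symm] at H3
      rw [if_neg n14.symm] at H4
      refine greedy4 G _ v1 v2 v3 v4
        hT1234
        n12 n13 n14 n23 n24 n34 L (by omega) ?_ ?_ ?_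
      · split_ifs at H2 ⊢ <;> omega
      · split_ifs at H3 ⊢ <;> omega
      · split_ifs at H4 ⊢ <;> omega
    · rw [if_neg n12] at H1
      rw [if_pos rfl] at H2
      rw [if_neg n23.symm] at H3
      rw [if_neg n24.symm] at H4
      refine greedy4 G _ v2 v1 v3 v4
        hT2134
        n12.symm n23 n24 n13 n14 n34 L (by omega) ?_ ?_ ?_
      · split_ifs at H1 ⊢ <;> omega
      · split_ifs at H3 ⊢ <;> omega
      · split_ifs at H4 ⊢ <;> omega
    · rw [if_neg n13] at H1
      rw [if_neg n23] at H2
      rw [if_pos rfl] at H3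
      rw [if_neg n34.symm] at H4
      refine greedy4 G _ v3 v1 v2 v4
        hT3124
        n13.symm n23.symm n34 n12 n14 n24 L (by omega) ?_ ?_ ?_
      · split_ifs at H1 ⊢ <;> omega
      · split_ifs at H2 ⊢ <;> omega
      · split_ifs at H4 ⊢ <;> omega
    · rw [if_neg n14] at H1
      rw [if_neg n24] at H2
      rw [if_neg n34] at H3
      rw [if_pos rfl] at H4
      refine greedy4 G _ v4 v1 v2 v3
        hT4123
        n14.symm n24.symm n34.symm n12 n13 n23 L (by omega) ?_ ?_ ?_
      · split_ifs at H1 ⊢ <;> omega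
      · split_ifs at H2 ⊢ <;> omega
      · split_ifs at H3 ⊢ <;> omega
  · -- FORB
    simp only [Finset.sdiff_empty]
    intro I hI hIcard _hforb L hL
    have hIc : I.card ≤ 3 := by omega
    obtain ⟨u, huS, huI⟩ : ∃ u ∈ ({v1, v2, v3, v4} : Finset V), u ∉ I := by
      by_contra hc
      push_neg at hc
      have := Finset.card_le_card hc
      omega
    have H1 := hL v1 (by simp)
    have H2 := hL v2 (by simp)
    have H3 := hL v3 (by simp)
    have H4 := hL v4 (by simp)
    beta_reduce at H1 H2 H3 H4
    rw [huniv v1, hd1, hquad v1, if_neg (G.irrefl (v := v1)), if_pos h12] at H1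
    rw [huniv v2, hd2, hquad v2, if_pos h12.symm, if_neg (G.irrefl (v := v2)), if_pos h23] at H2
    rw [huniv v3, hd3, hquad v3, if_pos h23.symm, if_neg (G.irrefl (v := v3)), if_pos h34] at H3
    rw [huniv v4, hd4, hquad v4, if_pos h34.symm, if_neg (G.irrefl (v := v4))] at H4
    simp only [Finset.mem_insert, Finset.mem_singleton] at huS
    rcases huS with h | h | h | h <;> subst u
    · -- u = v1, order v4 v3 v2 v1
      rw [if_neg huI] at H1
      refine greedy4 G _ v4 v3 v2 v1
        hT4321
        n34.symm n24.symm n14.symm n23.symm n13.symm n12.symm L ?_ ?_ ?_ ?_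
      · split_ifs at H4 ⊢ <;> omega
      · split_ifs at H3 ⊢ <;> omega
      · split_ifs at H2 ⊢ <;> omega
      · split_ifs at H1 ⊢ <;> omega
    · -- u = v2, order v4 v3 v1 v2
      rw [if_neg huI] at H2
      refine greedy4 G _ v4 v3 v1 v2
        hT4312
        n34.symm n14.symm n24.symm n13.symm n23.symm n12 L ?_ ?_ ?_ ?_
      · split_ifs at H4 ⊢ <;> omega
      · split_ifs at H3 ⊢ <;> omega
      · split_ifs at H1 ⊢ <;> omega
      · split_ifs at H2 ⊢ <;> omega
    · -- u = v3, order v1 v2 v4 v3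
      rw [if_neg huI] at H3
      refine greedy4 G _ v1 v2 v4 v3
        hT1243
        n12 n14 n13 n24 n23 n34.symm L ?_ ?_ ?_ ?_
      · split_ifs at H1 ⊢ <;> omega
      · split_ifs at H2 ⊢ <;> omega
      · split_ifs at H4 ⊢ <;> omega
      · split_ifs at H3 ⊢ <;> omega
    · -- u = v4, order v1 v2 v3 v4
      rw [if_neg huI] at H4
      refine greedy4 G _ v1 v2 v3 v4
        hT1234
        n12 n13 n14 n23 n24 n34 L ?_ ?_ ?_ ?_
      · split_ifs at H1 ⊢ <;> omega
      · split_ifs at H2 ⊢ <;> omega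
      · split_ifs at H3 ⊢ <;> omega
      · split_ifs at H4 ⊢ <;> omega
end
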